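/- Assume all subsets of Cantor space 2^ℕ are Baire measurable (have the property of Baire). Then there is no complete Mammen space with universe ℕ. -/

import Mathlib

open Set Topology TopologicalSpace

/-- A topology is perfect if every nonempty open set is infinite. -/
def IsPerfectTop {U : Type*} (T : TopologicalSpace U) : Prop :=
  ∀ V : Set U, IsOpen[T] V → V.Nonempty → V.Infinite

/-- A perfect topology is maximal if no strictly finer topology is perfect. -/
def IsMaxPerfectTop {U : Type*} (T : TopologicalSpace U) : Prop :=
  IsPerfectTop T ∧ ∀ T' : TopologicalSpace U, T' ≤ T → IsPerfectTop T' → T' = T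

/-- `(U, T, C)` is a Mammen space. -/
structure IsMammen {U : Type*} (T : TopologicalSpace U) (C : Set (Set U)) : Prop where
  nonemptyU : Nonempty U
  perfect : IsPerfectTop T
  hausdorff : @T2Space U T
  exNonempty : ∃ c ∈ C, c.Nonempty
  unionMem : ∀ c ∈ C, ∀ d ∈ C, c ∪ d ∈ C
  interMem : ∀ c ∈ C, ∀ d ∈ C, c ∩ d ∈ C
  singletonMem : ∀ c ∈ C, c.Nonempty → ∃ x ∈ c, ({x} : Set U) ∈ C
  emptyMem : ∅ ∈ C
  openInterC : ∀ s ∈ C, IsOpen[T] s → s = ∅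
  interOpenMem : ∀ c ∈ C, ∀ s : Set U, IsOpen[T] s → c ∩ s ∈ C

/-- A Mammen space is complete if every subset is the union of an open set
and a choice category. -/
def MammenComplete {U : Type*} (T : TopologicalSpace U) (C : Set (Set U)) : Prop :=
  ∀ X : Set U, ∃ s c, IsOpen[T] s ∧ c ∈ C ∧ X = s ∪ c


section Aux

/-- flip the coordinates where `c` is true -/
def flipOn (c : ℕ → Bool) (g : ℕ → Bool) : ℕ → Bool := fun n => xor (g n) (c n)

lemma flipOn_invol (c : ℕ → Bool) : Function.Involutive (flipOn c) := by
  intro g; funext n; simp [flipOn, Bool.xor_assoc]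

lemma continuous_flipOn (c : ℕ → Bool) : Continuous (flipOn c) :=
  continuous_pi fun n => (continuous_of_discreteTopology
    (f := fun b : Bool => xor b (c n))).comp (continuous_apply n)

lemma isOpenMap_flipOn (c : ℕ → Bool) : IsOpenMap (flipOn c) := by
  intro u hu
  have : flipOn c '' u = flipOn c ⁻¹' u := by
    ext g; constructor
    · rintro ⟨h, hh, rfl⟩; simpa [flipOn_invol c h] using hh
    · intro hg; exact ⟨flipOn c g, hg, flipOn_invol c g⟩
  rw [this]; exact hu.preimage (continuous_flipOn c)

lemma meagre_preimage_flipOn (c : ℕ → Bool) {s : Set (ℕ → Bool)} (h : IsMeagre s) :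
    IsMeagre (flipOn c ⁻¹' s) :=
  h.preimage_of_isOpenMap (continuous_flipOn c) (isOpenMap_flipOn c)

/-- Key zero-one-law style lemma: a Baire measurable subset of Cantor space invariant
under finite modifications and not containing any point with its full flip is meager. -/
lemma key_meagre (M : Set (ℕ → Bool)) (hBP : BaireMeasurableSet M)
    (hinv : ∀ f g : ℕ → Bool, {n | f n ≠ g n}.Finite → f ∈ M → g ∈ M)
    (hflip : ∀ f, f ∈ M → (fun n => !(f n)) ∈ M → False) : IsMeagre M := by
  by_contra hnm
  obtain ⟨u, hu, heq⟩ := hBP.residualEq_isOpen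
  rw [Filter.eventuallyEq_set] at heq
  have hDc : IsMeagre {x | ¬ (x ∈ M ↔ x ∈ u)} := by
    rw [IsMeagre]
    have hcompl : {x | ¬ (x ∈ M ↔ x ∈ u)}ᶜ = {x | x ∈ M ↔ x ∈ u} := by
      ext x; simp
    rw [hcompl]
    exact heq
  have hune : u.Nonempty := by
    rcases eq_empty_or_nonempty u with rfl | h
    · exact absurd (hDc.mono (fun x hx => by simp [hx])) hnm
    · exact h
  obtain ⟨f, hf⟩ := hune
  obtain ⟨I, w, hw, hpi⟩ := isOpen_pi_iff.mp hu f hf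
  set V : Set (ℕ → Bool) := Set.pi (I : Set ℕ) (fun i => ({f i} : Set Bool)) with hV
  have hVu : V ⊆ u := by
    refine subset_trans ?_ hpi
    intro g hg i hi
    have := hg i hi
    simp only [mem_singleton_iff] at this
    rw [this]; exact (hw i hi).2
  set V' : Set (ℕ → Bool) := Set.pi (I : Set ℕ) (fun i => ({!(f i)} : Set Bool)) with hV'
  have hV'open : IsOpen V' := isOpen_set_pi (I.finite_toSet) (fun i _ => isOpen_discrete _)
  have hV'ne : V'.Nonempty := ⟨fun n => !(f n), fun i _ => rfl⟩
  -- V \ M is meager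
  have h1 : IsMeagre (V \ M) := hDc.mono (fun x hx => by
    simp only [mem_setOf_eq]
    intro h
    exact hx.2 (h.mpr (hVu hx.1)))
  -- the finite flip c : flips exactly coordinates in I
  set c : ℕ → Bool := fun n => decide (n ∈ I) with hc
  have hMinv : flipOn c ⁻¹' M = M := by
    ext g
    have hfin : ∀ h : ℕ → Bool, {n | flipOn c h n ≠ h n}.Finite := by
      intro h
      apply I.finite_toSet.subset
      intro n hn
      simp only [mem_setOf_eq, flipOn] at hn
      by_contra hnI
      rw [Finset.mem_coe] at hnI
      apply hn
      simp only [hc]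
      rw [decide_eq_false hnI, Bool.xor_false]
    constructor
    · intro hg; exact hinv _ _ (by simpa [ne_comm] using hfin g) hg
    · intro hg
      refine hinv _ _ ?_ hg
      simpa [ne_comm] using hfin g
  have hpre : ∀ b : ℕ → Bool, (∀ i ∈ (I : Set ℕ), b i = true) → flipOn b ⁻¹' V = V' := by
    intro b hb
    ext g
    simp only [hV, hV', mem_preimage, Set.mem_pi, mem_singleton_iff]
    refine forall₂_congr fun i hi => ?_
    have hbi := hb i hi
    simp only [flipOn, hbi, Bool.xor_true]
    rcases Bool.eq_false_or_eq_true (g i) with h1 | h1 <;>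
      rcases Bool.eq_false_or_eq_true (f i) with h2 | h2 <;> rw [h1, h2] <;> decide
  have hpreV : flipOn c ⁻¹' V = V' := by
    refine hpre c fun i hi => ?_
    rw [hc]
    exact decide_eq_true (Finset.mem_coe.mp hi)
  have h2 : IsMeagre (V' \ M) := by
    have := meagre_preimage_flipOn c h1
    rwa [preimage_diff, hMinv, hpreV] at this
  -- the full flip
  set σ : (ℕ → Bool) → (ℕ → Bool) := flipOn (fun _ => true) with hσ
  have hpreVσ : σ ⁻¹' V = V' := hpre (fun _ => true) (fun _ _ => rfl)
  have h3 : IsMeagre (V' \ σ ⁻¹' M) := by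
    have := meagre_preimage_flipOn (fun _ => true) h1
    rwa [preimage_diff, ← hσ, hpreVσ] at this
  have hcover : V' ⊆ (V' \ M) ∪ (V' \ σ ⁻¹' M) := by
    intro g hg
    by_cases hgM : g ∈ M
    · by_cases hgσ : g ∈ σ ⁻¹' M
      · exfalso
        refine hflip g hgM ?_
        have : σ g = fun n => !(g n) := by
          funext n; simp [hσ, flipOn]
        rwa [← this]
      · exact Or.inr ⟨hg, hgσ⟩
    · exact Or.inl ⟨hg, hgM⟩
  have hV'm : IsMeagre V' := by
    refine IsMeagre.mono hcover ?_
    rw [IsMeagre, compl_union]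
    exact (residual _).inter_mem h2 h3
  -- nonempty open sets are not meager in a Baire space
  have hdense : Dense V'ᶜ := dense_of_mem_residual hV'm
  obtain ⟨x, hx1, hx2⟩ := hdense.inter_open_nonempty V' hV'open hV'ne
  exact hx2 hx1

end Aux

theorem stmt16 (hBaire : ∀ X : Set (ℕ → Bool), BaireMeasurableSet X) :
    ¬ ∃ (T : TopologicalSpace ℕ) (C : Set (Set ℕ)),
      IsMammen T C ∧ MammenComplete T C := by
  rintro ⟨T, C, hM, hComp⟩
  letI := T
  haveI : T2Space ℕ := hM.hausdorff
  -- Dichotomy: every set or its complement contains a nonempty open set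
  have dich : ∀ X : Set ℕ, (∃ u : Set ℕ, IsOpen u ∧ u.Nonempty ∧ u ⊆ X) ∨
      (∃ u : Set ℕ, IsOpen u ∧ u.Nonempty ∧ u ⊆ Xᶜ) := by
    intro X
    obtain ⟨s, c, hs, hc, hX⟩ := hComp X
    obtain ⟨s', c', hs', hc', hX'⟩ := hComp Xᶜ
    rcases s.eq_empty_or_nonempty with rfl | hsne
    · rcases s'.eq_empty_or_nonempty with rfl | hs'ne
      · exfalso
        rw [empty_union] at hX hX'
        have huniv : (univ : Set ℕ) ∈ C := by
          have := hM.unionMem c hc c' hc'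
          rwa [← hX, ← hX', union_compl_self] at this
        have := hM.openInterC univ huniv isOpen_univ
        exact (Set.univ_nonempty).ne_empty this
      · exact Or.inr ⟨s', hs', hs'ne, hX' ▸ subset_union_left⟩
    · exact Or.inl ⟨s, hs, hsne, hX ▸ subset_union_left⟩
  -- the neighborhood-like sets
  set Mx : ℕ → Set (ℕ → Bool) :=
    fun x => {f | ∃ u : Set ℕ, IsOpen u ∧ x ∈ u ∧ ∀ y ∈ u, y ≠ x → f y = true} with hMx
  have hMxMeagre : ∀ x, IsMeagre (Mx x) := by
    intro x
    apply key_meagre _ (hBaire _)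
    · -- invariance under finite changes
      rintro f g hfin ⟨u, hu, hxu, hall⟩
      refine ⟨u \ ({n | f n ≠ g n} \ {x}), hu.sdiff ((hfin.subset diff_subset).isClosed), ?_, ?_⟩
      · exact ⟨hxu, fun h => h.2 rfl⟩
      · rintro y ⟨hyu, hyd⟩ hyx
        have hfy : f y = true := hall y hyu hyx
        have : ¬ (f y ≠ g y) := fun h => hyd ⟨h, hyx⟩
        rw [not_not] at this
        rw [← this]; exact hfy
    · -- no point together with its flip
      rintro f ⟨u, hu, hxu, hallu⟩ ⟨v, hv, hxv, hallv⟩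
      have hsub : u ∩ v ⊆ {x} := by
        intro y ⟨hyu, hyv⟩
        by_contra hyx
        have h1 := hallu y hyu hyx
        have h2 := hallv y hyv hyx
        have h2' : (!(f y)) = true := h2
        rw [h1] at h2'
        simp at h2'
      have := hM.perfect (u ∩ v) (hu.inter hv) ⟨x, hxu, hxv⟩
      exact this ((Set.finite_singleton x).subset hsub)
  -- cover the Cantor space
  have hcover : (univ : Set (ℕ → Bool)) ⊆
      ⋃ x : ℕ, (Mx x ∪ flipOn (fun _ => true) ⁻¹' (Mx x)) := by
    intro f _
    rcases dich {n | f n = true} with ⟨u, hu, ⟨x, hx⟩, hsub⟩ | ⟨u, hu, ⟨x, hx⟩, hsub⟩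
    · exact mem_iUnion.mpr ⟨x, Or.inl ⟨u, hu, hx, fun y hy _ => hsub hy⟩⟩
    · refine mem_iUnion.mpr ⟨x, Or.inr ⟨u, hu, hx, fun y hy _ => ?_⟩⟩
      have : f y ≠ true := hsub hy
      simp only [flipOn, Bool.xor_true, Bool.not_eq_true']
      simpa using this
  have hunivMeagre : IsMeagre (univ : Set (ℕ → Bool)) := by
    refine IsMeagre.mono hcover (isMeagre_iUnion fun x => ?_)
    have h1 := hMxMeagre x
    have h2 := meagre_preimage_flipOn (fun _ => true) h1
    rw [IsMeagre, compl_union]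
    exact (residual _).inter_mem h1 h2
  have hdense : Dense ((univ : Set (ℕ → Bool))ᶜ) := dense_of_mem_residual hunivMeagre
  obtain ⟨g, hg1, hg2⟩ := hdense.inter_open_nonempty univ isOpen_univ ⟨fun _ => true, trivial⟩
  exact hg2 hg1
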